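/- Let (X, μ) be a standard probability space and let V = (V_t)_{t∈ℝ} be a continuous representation of ℝ by Markov operators on L²(X, μ) (so V_0 = Id, V_{t+u} = V_t∘V_u, and t ↦ ⟨V_t f, g⟩ is continuous for all f, g ∈ L²(X, μ)). Suppose there exists s ∈ ℝ with s ∉ {−1, 0, 1} and a unitary operator U on L²(X, μ) such that U∘V_{st} = V_t∘U for all t ∈ ℝ, and suppose that a·∫_ℝ V_t dP(t) + (1−a)·J belongs to the weak operator topology closure of {V_t : t ∈ ℝ} for some Borel probability measure P on ℝ, some 0 < a ≤ 1, and some Markov operator J on L²(X, μ). Then a·Id + (1−a)·K belongs to the weak operator topology closure of {V_t : t ∈ ℝ} for some contraction K on L²(X, μ). -/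

import Mathlib

open MeasureTheory Filter
open scoped ENNReal RealInnerProductSpace symmDiff

/-- The constant function `1` as an element of `L²(μ)`. -/
noncomputable def lpOne {X : Type*} [MeasurableSpace X] (μ : Measure X)
    [IsProbabilityMeasure μ] : Lp ℝ 2 μ := Lp.const 2 μ (1 : ℝ)

/-- A Markov operator on `L²(μ)`: a bounded operator `V` with `V f ≥ 0` whenever
`f ≥ 0`, `V 1 = 1` and `V* 1 = 1`. -/
def IsMarkovOp {X : Type*} [MeasurableSpace X] (μ : Measure X) [IsProbabilityMeasure μ]
    (V : Lp ℝ 2 μ →L[ℝ] Lp ℝ 2 μ) : Prop :=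
  (∀ f : Lp ℝ 2 μ, 0 ≤ f → 0 ≤ V f) ∧
  V (lpOne μ) = lpOne μ ∧
  ContinuousLinearMap.adjoint V (lpOne μ) = lpOne μ

/-- `Φ` belongs to the closure of `S` in the weak operator topology on
bounded operators of `L²(μ)`. -/
def InWOTClosure {X : Type*} [MeasurableSpace X] (μ : Measure X)
    (S : Set (Lp ℝ 2 μ →L[ℝ] Lp ℝ 2 μ)) (Φ : Lp ℝ 2 μ →L[ℝ] Lp ℝ 2 μ) : Prop :=
  (ContinuousLinearMapWOT.ofCLM Φ : Lp ℝ 2 μ →WOT[ℝ] Lp ℝ 2 μ) ∈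
    closure ((ContinuousLinearMapWOT.ofCLM : (Lp ℝ 2 μ →L[ℝ] Lp ℝ 2 μ) → (Lp ℝ 2 μ →WOT[ℝ] Lp ℝ 2 μ)) '' S)

/-- The flow `{T_t}` is partially rigid along the sequence `{t_n}` with rigidity
constant `u`: `liminf_n μ(A ∩ T_{-t_n} A) ≥ u · μ(A)` for every measurable `A`. -/
def PartiallyRigidAlongWith {X : Type*} [MeasurableSpace X] (μ : Measure X)
    (T : ℝ → X → X) (t : ℕ → ℝ) (u : ℝ) : Prop :=
  ∀ A : Set X, MeasurableSet A →
    ENNReal.ofReal u * μ A ≤ Filter.liminf (fun n => μ (A ∩ T (t n) ⁻¹' A)) Filter.atTop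

/-- The flow `{T_t}` is partially rigid along the sequence `{t_n}`. -/
def PartiallyRigidAlong {X : Type*} [MeasurableSpace X] (μ : Measure X)
    (T : ℝ → X → X) (t : ℕ → ℝ) : Prop :=
  ∃ u : ℝ, 0 < u ∧ u ≤ 1 ∧ PartiallyRigidAlongWith μ T t u

section AuxiliaryLemmas

open Topology

variable {X : Type*} [MeasurableSpace X] {μ : Measure X} [IsProbabilityMeasure μ]

private lemma real_inner_eq_mul' (x y : ℝ) : ⟪x, y⟫ = x * y := Real.inner_apply x y

/-- Pointwise quadratic lemma: if `A - 2qB + q² ≥ 0` for all rationals `q`, then `B² ≤ A`. -/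
private lemma quad_aux {A B : ℝ} (h : ∀ q : ℚ, 0 ≤ A - 2 * q * B + (q : ℝ) ^ 2) : B ^ 2 ≤ A := by
  have key : ∀ ε : ℝ, 0 < ε → B ^ 2 - A ≤ ε := by
    intro ε hε
    set δ := min 1 ε with hδ
    have hδ0 : 0 < δ := lt_min one_pos hε
    obtain ⟨q, hq⟩ := exists_rat_near B hδ0
    have h1 : 0 ≤ A - 2 * q * B + (q : ℝ) ^ 2 := h q
    have h2 : B ^ 2 - A ≤ ((q : ℝ) - B) ^ 2 := by nlinarith
    have h3 : ((q : ℝ) - B) ^ 2 ≤ δ ^ 2 := by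
      rw [abs_sub_comm] at hq
      nlinarith [abs_nonneg ((q : ℝ) - B), sq_abs ((q : ℝ) - B), hq.le]
    have h4 : δ ^ 2 ≤ ε := by
      have hδ1 : δ ≤ 1 := min_le_left _ _
      have hδε : δ ≤ ε := min_le_right _ _
      nlinarith
    linarith
  by_contra hc
  push_neg at hc
  have := key ((B ^ 2 - A) / 2) (by linarith)
  linarith

/-- A Markov operator contracts bounded elements of `L²`. -/
private lemma markov_contraction_bdd {V : Lp ℝ 2 μ →L[ℝ] Lp ℝ 2 μ} (hV : IsMarkovOp μ V)
    (f : Lp ℝ 2 μ) (C : ℝ) (hC : ∀ᵐ x ∂μ, |f x| ≤ C) : ‖V f‖ ≤ ‖f‖ := by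
  have hC' : ∀ᵐ x ∂μ, ‖(f : X → ℝ) x‖ ≤ |C| := by
    filter_upwards [hC] with x hx
    simpa [Real.norm_eq_abs] using hx.trans (le_abs_self C)
  have hmeas := Lp.aestronglyMeasurable f
  have hsq : MemLp (fun x => (f : X → ℝ) x ^ 2) 2 μ := by
    have hm2 : AEStronglyMeasurable (fun x => (f : X → ℝ) x ^ 2) μ := by
      have := hmeas.mul hmeas
      refine this.congr (Filter.Eventually.of_forall fun x => ?_)
      simp [sq]
    refine MemLp.of_bound hm2 (|C| ^ 2) ?_
    · filter_upwards [hC'] with x hx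
      rw [Real.norm_eq_abs, abs_pow] at *
      simpa [sq_abs] using pow_le_pow_left₀ (abs_nonneg _) hx 2
  set fsq : Lp ℝ 2 μ := hsq.toLp _ with hfsq
  have h6' : (lpOne μ : X → ℝ) =ᵐ[μ] Function.const X (1 : ℝ) := Lp.coeFn_const 2 μ (1 : ℝ)
  have h5' : (fsq : X → ℝ) =ᵐ[μ] fun x => (f : X → ℝ) x ^ 2 := hsq.coeFn_toLp
  have hq : ∀ q : ℚ, (0 : Lp ℝ 2 μ) ≤ V fsq - ((2 * q : ℝ)) • (V f) + ((q : ℝ) ^ 2) • (lpOne μ) := by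
    intro q
    have h0 : (0 : Lp ℝ 2 μ) ≤ fsq - ((2 * q : ℝ)) • f + ((q : ℝ) ^ 2) • (lpOne μ) := by
      rw [← Lp.coeFn_nonneg]
      filter_upwards [Lp.coeFn_add (fsq - ((2 * q : ℝ)) • f) (((q : ℝ) ^ 2) • (lpOne μ)),
        Lp.coeFn_sub fsq (((2 * q : ℝ)) • f), Lp.coeFn_smul ((2 * q : ℝ)) f,
        Lp.coeFn_smul ((q : ℝ) ^ 2) (lpOne μ), h5', h6']
        with x h1 h2 h3 h4 h5 h6
      simp only [Pi.zero_apply, h1, h2, h3, h4, Pi.add_apply, Pi.sub_apply, h5,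
        Pi.smul_apply, smul_eq_mul, h6, Function.const_apply]
      nlinarith [sq_nonneg ((f : X → ℝ) x - q)]
    have := hV.1 _ h0
    calc (0 : Lp ℝ 2 μ) ≤ V (fsq - ((2 * q : ℝ)) • f + ((q : ℝ) ^ 2) • (lpOne μ)) := this
      _ = V fsq - ((2 * q : ℝ)) • (V f) + ((q : ℝ) ^ 2) • (lpOne μ) := by
          rw [map_add, map_sub, ContinuousLinearMap.map_smul, ContinuousLinearMap.map_smul,
            hV.2.1]
  have hae : ∀ᵐ x ∂μ, ((V f : X → ℝ) x) ^ 2 ≤ (V fsq : X → ℝ) x := by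
    have h1 : ∀ᵐ x ∂μ, ∀ q : ℚ,
        0 ≤ (V fsq : X → ℝ) x - 2 * q * (V f : X → ℝ) x + (q : ℝ) ^ 2 := by
      rw [ae_all_iff]
      intro q
      have h2 := (Lp.coeFn_nonneg _).mpr (hq q)
      filter_upwards [h2, Lp.coeFn_add (V fsq - ((2 * q : ℝ)) • (V f)) (((q : ℝ) ^ 2) • (lpOne μ)),
        Lp.coeFn_sub (V fsq) (((2 * q : ℝ)) • (V f)), Lp.coeFn_smul ((2 * q : ℝ)) (V f),
        Lp.coeFn_smul ((q : ℝ) ^ 2) (lpOne μ), h6']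
        with x h0 ha hb hc hd he
      simp only [ha, hb, hc, hd, Pi.add_apply, Pi.sub_apply, Pi.smul_apply, smul_eq_mul,
        he, Function.const_apply] at h0
      simpa using h0
    filter_upwards [h1] with x hx
    exact quad_aux hx
  have int1 : Integrable (fun x => ((V f : X → ℝ) x) ^ 2) μ := by
    refine (L2.integrable_inner (𝕜 := ℝ) (V f) (V f)).congr ?_
    exact Filter.Eventually.of_forall fun x => by simp [sq, real_inner_eq_mul']
  have int2 : Integrable (fun x => (V fsq : X → ℝ) x) μ :=
    memLp_one_iff_integrable.mp ((Lp.memLp (V fsq)).mono_exponent (by norm_num))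
  have mono := integral_mono_ae int1 int2 hae
  have i1 : ⟪V fsq, lpOne μ⟫ = ∫ x, (V fsq : X → ℝ) x ∂μ := by
    rw [L2.inner_def]
    refine integral_congr_ae ?_
    filter_upwards [h6'] with x h
    simp [real_inner_eq_mul', h]
  have i2 : ⟪fsq, lpOne μ⟫ = ∫ x, ((f : X → ℝ) x) ^ 2 ∂μ := by
    rw [L2.inner_def]
    refine integral_congr_ae ?_
    filter_upwards [h6', h5'] with x h hx
    simp [real_inner_eq_mul', h, hx]
  have i3 : ⟪V fsq, lpOne μ⟫ = ⟪fsq, lpOne μ⟫ := by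
    rw [← ContinuousLinearMap.adjoint_inner_right V fsq (lpOne μ), hV.2.2]
  have eVV : ‖V f‖ ^ 2 = ∫ x, ((V f : X → ℝ) x) ^ 2 ∂μ := by
    rw [← real_inner_self_eq_norm_sq, L2.inner_def]
    exact integral_congr_ae (Filter.Eventually.of_forall fun x => by
      simp [real_inner_eq_mul', sq])
  have eff : ‖f‖ ^ 2 = ∫ x, ((f : X → ℝ) x) ^ 2 ∂μ := by
    rw [← real_inner_self_eq_norm_sq, L2.inner_def]
    exact integral_congr_ae (Filter.Eventually.of_forall fun x => by
      simp [real_inner_eq_mul', sq])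
  have hsq2 : ‖V f‖ ^ 2 ≤ ‖f‖ ^ 2 := by
    rw [eVV, eff]
    linarith [mono, i1, i2, i3]
  nlinarith [hsq2, norm_nonneg (V f), norm_nonneg f]

/-- Every Markov operator is a contraction. -/
private lemma markov_norm_le_one {V : Lp ℝ 2 μ →L[ℝ] Lp ℝ 2 μ} (hV : IsMarkovOp μ V) :
    ‖V‖ ≤ 1 := by
  refine ContinuousLinearMap.opNorm_le_bound V zero_le_one (fun f => ?_)
  rw [one_mul]
  refine (Lp.simpleFunc.denseRange (by norm_num : (2 : ℝ≥0∞) ≠ ∞)).induction_on f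
    (isClosed_le (V.continuous.norm) continuous_norm) (fun g => ?_)
  obtain ⟨C, hC⟩ := (Lp.simpleFunc.toSimpleFunc g).exists_forall_norm_le
  refine markov_contraction_bdd hV _ C ?_
  filter_upwards [Lp.simpleFunc.toSimpleFunc_eq_toFun g] with x hx
  rw [← hx]
  simpa [Real.norm_eq_abs] using hC x

/-- Conjugating by an isometry compatible with the flow preserves the WOT closure
of the flow. -/
private lemma conj_iter_mem_closure (V : ℝ → (Lp ℝ 2 μ →L[ℝ] Lp ℝ 2 μ)) (c : ℝ)
    (Y : Lp ℝ 2 μ ≃ₗᵢ[ℝ] Lp ℝ 2 μ)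
    (hY1 : ∀ (t : ℝ) (f : Lp ℝ 2 μ), Y (V t (Y.symm f)) = V (c * t) f)
    (Φ : Lp ℝ 2 μ →L[ℝ] Lp ℝ 2 μ)
    (hΦmem : (ContinuousLinearMapWOT.equiv (σ := RingHom.id ℝ) (E := Lp ℝ 2 μ) (F := Lp ℝ 2 μ)).symm Φ ∈
      closure (((ContinuousLinearMapWOT.equiv (σ := RingHom.id ℝ) (E := Lp ℝ 2 μ) (F := Lp ℝ 2 μ)).symm) '' (Set.range V))) :
    ∀ n : ℕ, (ContinuousLinearMapWOT.equiv (σ := RingHom.id ℝ) (E := Lp ℝ 2 μ) (F := Lp ℝ 2 μ)).symm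
      ((fun T => (Y.toLinearIsometry.toContinuousLinearMap).comp
        (T.comp (Y.symm.toLinearIsometry.toContinuousLinearMap)))^[n] Φ) ∈
      closure (((ContinuousLinearMapWOT.equiv (σ := RingHom.id ℝ) (E := Lp ℝ 2 μ) (F := Lp ℝ 2 μ)).symm) '' (Set.range V)) := by
  set YC := Y.toLinearIsometry.toContinuousLinearMap with hYC
  set YsC := Y.symm.toLinearIsometry.toContinuousLinearMap with hYsC
  set conjC : (Lp ℝ 2 μ →L[ℝ] Lp ℝ 2 μ) → (Lp ℝ 2 μ →L[ℝ] Lp ℝ 2 μ) :=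
    fun T => YC.comp (T.comp YsC) with hconjC
  set tw := (ContinuousLinearMapWOT.equiv (σ := RingHom.id ℝ) (E := Lp ℝ 2 μ) (F := Lp ℝ 2 μ)).symm with htw
  set S := tw '' (Set.range V) with hS
  have hconjV : ∀ t : ℝ, conjC (V t) = V (c * t) := by
    intro t
    refine ContinuousLinearMap.ext fun f => ?_
    exact hY1 t f
  set CW : ((Lp ℝ 2 μ) →WOT[ℝ] (Lp ℝ 2 μ)) → ((Lp ℝ 2 μ) →WOT[ℝ] (Lp ℝ 2 μ)) :=
    fun A => tw (conjC (tw.symm A)) with hCW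
  have hCWcont : Continuous CW := by
    apply ContinuousLinearMapWOT.continuous_of_dual_apply_continuous
    intro x y
    have : (fun A => y ((CW A) x)) =
        fun A : (Lp ℝ 2 μ) →WOT[ℝ] (Lp ℝ 2 μ) => (y.comp YC) (A (Y.symm x)) := by
      funext A
      simp [hCW, ContinuousLinearMapWOT.ofCLM_apply]
      rfl
    rw [this]
    exact ContinuousLinearMapWOT.continuous_dual_apply (Y.symm x) (y.comp YC)
  have hmaps : CW '' S ⊆ S := by
    intro w hw
    obtain ⟨A, hA, rfl⟩ := hw
    obtain ⟨T, hT, rfl⟩ := hA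
    obtain ⟨t, rfl⟩ := hT
    refine ⟨V (c * t), ⟨c * t, rfl⟩, ?_⟩
    simp [hCW, hconjV t]
  intro n
  induction n with
  | zero => simpa only [Function.iterate_zero_apply] using hΦmem
  | succ n ih =>
    rw [Function.iterate_succ_apply']
    have heq : tw (conjC ((conjC)^[n] Φ)) = CW (tw ((conjC)^[n] Φ)) := by simp [hCW]
    rw [heq]
    have h2 : CW (tw ((conjC)^[n] Φ)) ∈ CW '' closure S := Set.mem_image_of_mem _ ih
    have h3 := image_closure_subset_closure_image hCWcont (s := S) h2
    exact closure_mono hmaps h3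

/-- From an ultrafilter limit of a uniformly bounded bilinear family, produce a contraction. -/
private lemma exists_contraction_of_ultralimit (β : ℕ → Lp ℝ 2 μ → Lp ℝ 2 μ → ℝ)
    (U : Ultrafilter ℕ)
    (hadd : ∀ n f f' g, β n (f + f') g = β n f g + β n f' g)
    (hsmul : ∀ n (r : ℝ) f g, β n (r • f) g = r * β n f g)
    (haddr : ∀ n f g g', β n f (g + g') = β n f g + β n f g')
    (hsmulr : ∀ n f (r : ℝ) g, β n f (r • g) = r * β n f g)
    (hbdd : ∀ n f g, |β n f g| ≤ ‖f‖ * ‖g‖) :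
    ∃ K : Lp ℝ 2 μ →L[ℝ] Lp ℝ 2 μ, ‖K‖ ≤ 1 ∧
      ∀ f g, Tendsto (fun n => β n f g) U (𝓝 ⟪K f, g⟫) := by
  classical
  have hlim : ∀ f g, ∃ x : ℝ, Tendsto (fun n => β n f g) U (𝓝 x) := by
    intro f g
    have hmem : Set.Icc (-(‖f‖ * ‖g‖)) (‖f‖ * ‖g‖) ∈ U.map (fun n => β n f g) := by
      refine Filter.mem_map.mpr (Filter.univ_mem' fun n => ?_)
      exact abs_le.mp (hbdd n f g)
    obtain ⟨x, -, hx⟩ := isCompact_Icc.ultrafilter_le_nhds (U.map (fun n => β n f g))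
      (Filter.le_principal_iff.mpr hmem)
    exact ⟨x, hx⟩
  choose k hk using hlim
  have hkadd : ∀ f f' g, k (f + f') g = k f g + k f' g := fun f f' g =>
    tendsto_nhds_unique (hk (f + f') g)
      (by simpa only [hadd] using (hk f g).add (hk f' g))
  have hksmul : ∀ (r : ℝ) f g, k (r • f) g = r * k f g := fun r f g =>
    tendsto_nhds_unique (hk (r • f) g)
      (by simpa only [hsmul] using (hk f g).const_mul r)
  have hkaddr : ∀ f g g', k f (g + g') = k f g + k f g' := fun f g g' =>
    tendsto_nhds_unique (hk f (g + g'))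
      (by simpa only [haddr] using (hk f g).add (hk f g'))
  have hksmulr : ∀ f (r : ℝ) g, k f (r • g) = r * k f g := fun f r g =>
    tendsto_nhds_unique (hk f (r • g))
      (by simpa only [hsmulr] using (hk f g).const_mul r)
  have hkbdd : ∀ f g, |k f g| ≤ ‖f‖ * ‖g‖ := by
    intro f g
    have h1 : Tendsto (fun n => |β n f g|) U (𝓝 |k f g|) := (hk f g).abs
    exact le_of_tendsto h1 (Filter.Eventually.of_forall fun n => hbdd n f g)
  have hfun : ∀ f : Lp ℝ 2 μ, ∃ φ : Lp ℝ 2 μ →L[ℝ] ℝ, (∀ g, φ g = k f g) ∧ ‖φ‖ ≤ ‖f‖ := by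
    intro f
    refine ⟨LinearMap.mkContinuous
      { toFun := fun g => k f g,
        map_add' := fun g g' => hkaddr f g g',
        map_smul' := fun r g => hksmulr f r g } ‖f‖ (fun g => by
          rw [Real.norm_eq_abs]; exact (hkbdd f g).trans (by rfl)), fun g => rfl, ?_⟩
    exact LinearMap.mkContinuous_norm_le _ (norm_nonneg f) _
  choose φ hφeq hφnorm using hfun
  set Kmap : Lp ℝ 2 μ →ₗ[ℝ] Lp ℝ 2 μ :=
    { toFun := fun f => (InnerProductSpace.toDual ℝ (Lp ℝ 2 μ)).symm (φ f),
      map_add' := by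
        intro f f'
        have h1 : φ (f + f') = φ f + φ f' := ContinuousLinearMap.ext fun g => by
          simp only [ContinuousLinearMap.add_apply, hφeq]; exact hkadd f f' g
        show (InnerProductSpace.toDual ℝ (Lp ℝ 2 μ)).symm (φ (f + f')) = _
        rw [h1, map_add],
      map_smul' := by
        intro r f
        have h1 : φ (r • f) = r • φ f := ContinuousLinearMap.ext fun g => by
          simp only [ContinuousLinearMap.smul_apply, hφeq, smul_eq_mul]; exact hksmul r f g
        show (InnerProductSpace.toDual ℝ (Lp ℝ 2 μ)).symm (φ (r • f)) = _
        rw [h1, _root_.map_smul]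
        rfl } with hKmap
  have hKb : ∀ f, ‖Kmap f‖ ≤ 1 * ‖f‖ := by
    intro f
    rw [one_mul]
    calc ‖Kmap f‖ = ‖φ f‖ :=
        (InnerProductSpace.toDual ℝ (Lp ℝ 2 μ)).symm.norm_map (φ f)
      _ ≤ ‖f‖ := hφnorm f
  refine ⟨Kmap.mkContinuous 1 hKb, ?_, ?_⟩
  · exact LinearMap.mkContinuous_norm_le _ zero_le_one _
  · intro f g
    have heq : ⟪(Kmap.mkContinuous 1 hKb) f, g⟫ = k f g := by
      show ⟪(InnerProductSpace.toDual ℝ (Lp ℝ 2 μ)).symm (φ f), g⟫ = k f g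
      rw [InnerProductSpace.toDual_symm_apply, hφeq]
    rw [heq]
    exact hk f g

end AuxiliaryLemmas

open Topology in
set_option maxHeartbeats 1000000 in
/-- Lemma 6.2: let `V = (V_t)` be a continuous representation of `ℝ` by
Markov operators on `L²(X, μ)`. If `V` is spectrally self-similar at scale
`s ∉ {-1, 0, 1}` (i.e. `U ∘ V_{st} = V_t ∘ U` for a unitary `U`) and
`a ∫ V_t dP(t) + (1-a) J` belongs to the WOT closure of `{V_t : t ∈ ℝ}` for some
probability measure `P`, `0 < a ≤ 1` and Markov operator `J`, then `a·Id + (1-a)·K`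
belongs to the WOT closure of `{V_t : t ∈ ℝ}` for some contraction `K`. -/
theorem stmt9 {X : Type*} [MeasurableSpace X] [StandardBorelSpace X]
    (μ : Measure X) [IsProbabilityMeasure μ]
    (V : ℝ → (Lp ℝ 2 μ →L[ℝ] Lp ℝ 2 μ))
    (hV0 : V 0 = ContinuousLinearMap.id ℝ (Lp ℝ 2 μ))
    (hVadd : ∀ t u : ℝ, V (t + u) = (V t).comp (V u))
    (hVmarkov : ∀ t : ℝ, IsMarkovOp μ (V t))
    (hVcont : ∀ f g : Lp ℝ 2 μ, Continuous fun t : ℝ => ⟪V t f, g⟫)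
    (s : ℝ) (hs0 : s ≠ 0) (hs1 : s ≠ 1) (hsm1 : s ≠ -1)
    (W : Lp ℝ 2 μ ≃ₗᵢ[ℝ] Lp ℝ 2 μ)
    (hW : ∀ (t : ℝ) (f : Lp ℝ 2 μ), W (V (s * t) f) = V t (W f))
    (P : Measure ℝ) [IsProbabilityMeasure P]
    (a : ℝ) (ha0 : 0 < a) (ha1 : a ≤ 1)
    (J : Lp ℝ 2 μ →L[ℝ] Lp ℝ 2 μ) (hJ : IsMarkovOp μ J)
    (Φ : Lp ℝ 2 μ →L[ℝ] Lp ℝ 2 μ)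
    (hΦ : ∀ f g : Lp ℝ 2 μ, ⟪Φ f, g⟫ = a * (∫ t, ⟪V t f, g⟫ ∂P) + (1 - a) * ⟪J f, g⟫)
    (hΦmem : InWOTClosure μ (Set.range V) Φ) :
    ∃ K : Lp ℝ 2 μ →L[ℝ] Lp ℝ 2 μ, ‖K‖ ≤ 1 ∧
      InWOTClosure μ (Set.range V)
        (a • ContinuousLinearMap.id ℝ (Lp ℝ 2 μ) + (1 - a) • K) := by
  classical
  -- Step 1: the rescaling isometry with |c| < 1
  obtain ⟨Y, c, hc, hY1⟩ :
      ∃ (Y : Lp ℝ 2 μ ≃ₗᵢ[ℝ] Lp ℝ 2 μ) (c : ℝ), |c| < 1 ∧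
        ∀ (t : ℝ) (f : Lp ℝ 2 μ), Y (V t (Y.symm f)) = V (c * t) f := by
    have habs : |s| ≠ 1 := by
      intro h
      rcases (abs_eq (zero_le_one)).mp h with h' | h' <;> [exact hs1 h'; exact hsm1 h']
    rcases lt_or_ge |s| 1 with h | h
    · refine ⟨W.symm, s, h, fun t f => ?_⟩
      have h1 := hW t f
      simp only [LinearIsometryEquiv.symm_symm]
      rw [← h1, LinearIsometryEquiv.symm_apply_apply]
    · have hgt : 1 < |s| := lt_of_le_of_ne h (Ne.symm habs)
      refine ⟨W, s⁻¹, by rw [abs_inv]; exact inv_lt_one_of_one_lt₀ hgt, fun t f => ?_⟩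
      have h1 := hW (s⁻¹ * t) (W.symm f)
      rw [← mul_assoc, mul_inv_cancel₀ hs0, one_mul, LinearIsometryEquiv.apply_symm_apply] at h1
      exact h1
  -- notation
  set Ys : Lp ℝ 2 μ → Lp ℝ 2 μ := fun f => Y.symm f with hYs
  set conjC : (Lp ℝ 2 μ →L[ℝ] Lp ℝ 2 μ) → (Lp ℝ 2 μ →L[ℝ] Lp ℝ 2 μ) :=
    fun T => (Y.toLinearIsometry.toContinuousLinearMap).comp
      (T.comp (Y.symm.toLinearIsometry.toContinuousLinearMap)) with hconjC
  set Φop : ℕ → (Lp ℝ 2 μ →L[ℝ] Lp ℝ 2 μ) := fun n => conjC^[n] Φ with hΦopdef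
  -- iterates of Y.symm
  have hYsnorm : ∀ (n : ℕ) (f : Lp ℝ 2 μ), ‖Ys^[n] f‖ = ‖f‖ := by
    intro n
    induction n with
    | zero => intro f; simp
    | succ n ih =>
      intro f
      rw [Function.iterate_succ_apply]
      rw [ih (Ys f)]
      exact Y.symm.norm_map f
  have hYsadd : ∀ (n : ℕ) (f f' : Lp ℝ 2 μ), Ys^[n] (f + f') = Ys^[n] f + Ys^[n] f' := by
    intro n
    induction n with
    | zero => intro f f'; simp
    | succ n ih =>
      intro f f'
      simp only [Function.iterate_succ_apply]
      rw [show Ys (f + f') = Ys f + Ys f' from Y.symm.map_add f f', ih]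
  have hYssmul : ∀ (n : ℕ) (r : ℝ) (f : Lp ℝ 2 μ), Ys^[n] (r • f) = r • Ys^[n] f := by
    intro n
    induction n with
    | zero => intro r f; simp
    | succ n ih =>
      intro r f
      simp only [Function.iterate_succ_apply]
      rw [show Ys (r • f) = r • Ys f from Y.symm.map_smul r f, ih]
  -- the conjugation identity for the flow
  have hiter : ∀ (n : ℕ) (t : ℝ) (f g : Lp ℝ 2 μ),
      ⟪V t (Ys^[n] f), Ys^[n] g⟫ = ⟪V (c ^ n * t) f, g⟫ := by
    intro n
    induction n with
    | zero => intro t f g; simp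
    | succ n ih =>
      intro t f g
      have hmul : c * (c ^ n * t) = c ^ (n + 1) * t := by ring
      calc ⟪V t (Ys^[n + 1] f), Ys^[n + 1] g⟫
          = ⟪V t (Ys^[n] (Ys f)), Ys^[n] (Ys g)⟫ := by
            rw [Function.iterate_succ_apply, Function.iterate_succ_apply]
        _ = ⟪V (c ^ n * t) (Ys f), Ys g⟫ := ih t (Ys f) (Ys g)
        _ = ⟪Y (V (c ^ n * t) (Ys f)), Y (Ys g)⟫ := (Y.inner_map_map _ _).symm
        _ = ⟪V (c * (c ^ n * t)) f, g⟫ := by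
            rw [hY1 (c ^ n * t) f]
            congr 1
            exact Y.apply_symm_apply g
        _ = ⟪V (c ^ (n + 1) * t) f, g⟫ := by rw [hmul]
  -- the conjugated operators, inner-product description
  have hΦop : ∀ (n : ℕ) (f g : Lp ℝ 2 μ), ⟪Φop n f, g⟫ = ⟪Φ (Ys^[n] f), Ys^[n] g⟫ := by
    intro n
    induction n with
    | zero => intro f g; simp [hΦopdef]
    | succ n ih =>
      intro f g
      have h1 : Φop (n + 1) f = Y ((Φop n) (Ys f)) := by
        simp only [hΦopdef, Function.iterate_succ_apply']
        rfl
      have h2 : ⟪Y ((Φop n) (Ys f)), g⟫ = ⟪(Φop n) (Ys f), Ys g⟫ := by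
        conv_lhs => rw [show g = Y (Ys g) from (Y.apply_symm_apply g).symm]
        exact Y.inner_map_map _ _
      rw [h1, h2, ih (Ys f) (Ys g), ← Function.iterate_succ_apply, ← Function.iterate_succ_apply]
  have hform : ∀ (n : ℕ) (f g : Lp ℝ 2 μ),
      ⟪Φop n f, g⟫ = a * (∫ t, ⟪V (c ^ n * t) f, g⟫ ∂P)
        + (1 - a) * ⟪J (Ys^[n] f), Ys^[n] g⟫ := by
    intro n f g
    rw [hΦop n f g, hΦ (Ys^[n] f) (Ys^[n] g)]
    congr 1
    congr 1
    exact integral_congr_ae (Filter.Eventually.of_forall fun t => hiter n t f g)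
  -- contraction bounds
  have hVc : ∀ (t : ℝ) (f : Lp ℝ 2 μ), ‖V t f‖ ≤ ‖f‖ := by
    intro t f
    have := (V t).le_of_opNorm_le (markov_norm_le_one (hVmarkov t)) f
    simpa using this
  have hJ1 : ‖J‖ ≤ 1 := markov_norm_le_one hJ
  -- the ultrafilter
  set U : Ultrafilter ℕ := Ultrafilter.of atTop with hUdef
  have hU : (U : Filter ℕ) ≤ atTop := Ultrafilter.of_le _
  -- the limit contraction K
  obtain ⟨K, hKnorm, hKlim⟩ := exists_contraction_of_ultralimit
    (β := fun n f g => ⟪J (Ys^[n] f), Ys^[n] g⟫) U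
    (by intro n f f' g; rw [hYsadd, map_add, inner_add_left])
    (by intro n r f g; rw [hYssmul, ContinuousLinearMap.map_smul, real_inner_smul_left])
    (by intro n f g g'; rw [hYsadd, inner_add_right])
    (by intro n f r g; rw [hYssmul, real_inner_smul_right])
    (by
      intro n f g
      calc |⟪J (Ys^[n] f), Ys^[n] g⟫| ≤ ‖J (Ys^[n] f)‖ * ‖Ys^[n] g‖ :=
            abs_real_inner_le_norm _ _
        _ ≤ ‖Ys^[n] f‖ * ‖Ys^[n] g‖ := by
            have h2 := J.le_of_opNorm_le hJ1 (Ys^[n] f)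
            rw [one_mul] at h2
            exact mul_le_mul_of_nonneg_right h2 (norm_nonneg _)
        _ = ‖f‖ * ‖g‖ := by rw [hYsnorm, hYsnorm])
  -- dominated convergence
  have hint : ∀ f g : Lp ℝ 2 μ,
      Tendsto (fun n => ∫ t, ⟪V (c ^ n * t) f, g⟫ ∂P) atTop (𝓝 ⟪f, g⟫) := by
    intro f g
    have hconst : ⟪f, g⟫ = ∫ _ : ℝ, ⟪f, g⟫ ∂P := by simp
    rw [hconst]
    refine tendsto_integral_of_dominated_convergence (fun _ => ‖f‖ * ‖g‖) ?_ ?_ ?_ ?_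
    · intro n
      exact ((hVcont f g).comp (continuous_const.mul continuous_id)).aestronglyMeasurable
    · exact integrable_const _
    · intro n
      refine Filter.Eventually.of_forall fun t => ?_
      rw [Real.norm_eq_abs]
      calc |⟪V (c ^ n * t) f, g⟫| ≤ ‖V (c ^ n * t) f‖ * ‖g‖ := abs_real_inner_le_norm _ _
        _ ≤ ‖f‖ * ‖g‖ := mul_le_mul_of_nonneg_right (hVc _ f) (norm_nonneg g)
    · refine Filter.Eventually.of_forall fun t => ?_
      have h0 : Tendsto (fun n : ℕ => c ^ n * t) atTop (𝓝 0) := by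
        have := tendsto_pow_atTop_nhds_zero_of_abs_lt_one hc
        simpa using this.mul_const t
      have h1 := ((hVcont f g).tendsto 0).comp h0
      have h2 : ⟪V 0 f, g⟫ = ⟪f, g⟫ := by rw [hV0]; rfl
      rw [h2] at h1
      exact h1
  -- membership of the conjugated operators in the WOT closure
  have hmem := conj_iter_mem_closure V c Y hY1 Φ hΦmem
  -- conclusion
  refine ⟨K, hKnorm, ?_⟩
  show (ContinuousLinearMapWOT.equiv (σ := RingHom.id ℝ) (E := Lp ℝ 2 μ) (F := Lp ℝ 2 μ)).symm
      (a • ContinuousLinearMap.id ℝ (Lp ℝ 2 μ) + (1 - a) • K) ∈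
    closure (((ContinuousLinearMapWOT.equiv (σ := RingHom.id ℝ) (E := Lp ℝ 2 μ) (F := Lp ℝ 2 μ)).symm) '' (Set.range V))
  rw [← closure_closure (s := ((ContinuousLinearMapWOT.equiv (σ := RingHom.id ℝ) (E := Lp ℝ 2 μ) (F := Lp ℝ 2 μ)).symm) '' (Set.range V))]
  refine mem_closure_of_tendsto (f := fun n =>
    (ContinuousLinearMapWOT.equiv (σ := RingHom.id ℝ) (E := Lp ℝ 2 μ) (F := Lp ℝ 2 μ)).symm (Φop n)) (b := (U : Filter ℕ)) ?_
    (Filter.Eventually.of_forall hmem)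
  rw [ContinuousLinearMapWOT.tendsto_iff_forall_dual_apply_tendsto]
  intro x y
  set g : Lp ℝ 2 μ := (InnerProductSpace.toDual ℝ (Lp ℝ 2 μ)).symm y with hg
  have hyv : ∀ v : Lp ℝ 2 μ, y v = ⟪v, g⟫ := by
    intro v
    rw [real_inner_comm]
    exact (InnerProductSpace.toDual_symm_apply).symm
  have hseq : (fun n => y (((ContinuousLinearMapWOT.equiv (σ := RingHom.id ℝ) (E := Lp ℝ 2 μ) (F := Lp ℝ 2 μ)).symm (Φop n)) x)) =
      fun n => a * (∫ t, ⟪V (c ^ n * t) x, g⟫ ∂P) + (1 - a) * ⟪J (Ys^[n] x), Ys^[n] g⟫ := by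
    funext n
    rw [show ∀ (A : Lp ℝ 2 μ →L[ℝ] Lp ℝ 2 μ) (v : Lp ℝ 2 μ), (ContinuousLinearMapWOT.equiv (σ := RingHom.id ℝ) (E := Lp ℝ 2 μ) (F := Lp ℝ 2 μ)).symm A v = A v from fun _ _ => rfl, hyv, hform]
  have htarget : y (((ContinuousLinearMapWOT.equiv (σ := RingHom.id ℝ) (E := Lp ℝ 2 μ) (F := Lp ℝ 2 μ)).symm
      (a • ContinuousLinearMap.id ℝ (Lp ℝ 2 μ) + (1 - a) • K)) x) =
      a * ⟪x, g⟫ + (1 - a) * ⟪K x, g⟫ := by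
    rw [show ∀ (A : Lp ℝ 2 μ →L[ℝ] Lp ℝ 2 μ) (v : Lp ℝ 2 μ), (ContinuousLinearMapWOT.equiv (σ := RingHom.id ℝ) (E := Lp ℝ 2 μ) (F := Lp ℝ 2 μ)).symm A v = A v from fun _ _ => rfl, hyv]
    simp only [ContinuousLinearMap.add_apply, ContinuousLinearMap.coe_smul',
      Pi.smul_apply, ContinuousLinearMap.coe_id', id_eq]
    rw [inner_add_left, real_inner_smul_left, real_inner_smul_left]
  rw [hseq, htarget]
  exact (((hint x g).mono_left hU).const_mul a).add ((hKlim x g).const_mul (1 - a))
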